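/- arXiv:1801.02932 — 2 statements merged into one kernel-verified Lean document; each statement's English description precedes it below -/
import Mathlib

section
/- For every family of integers t = (t_{i,j,k})_{1 ≤ i < j < k ≤ n}, define subgroups G_i(t) = ⟨a_i, a_{i+1}, …, a_n⟩ ≤ G(t) for 1 ≤ i ≤ n and G_{n+1}(t) = {1}. Then for each 1 ≤ i ≤ n the commutator subgroup ⁅G(t), G_i(t)⁆ is contained in G_{i+1}(t); in particular, each G_i(t) is a normal subgroup of G(t) and G(t) = G_1(t) ≥ G_2(t) ≥ ⋯ ≥ G_{n+1}(t) = {1} is a central series of G(t). -/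
namespace HallPoly

open scoped commutatorElement

/-- The ordered product `g_1^{e_1} ⋯ g_n^{e_n}` taken in increasing order of indices. -/
def prodPow {Γ : Type*} [Group Γ] (n : ℕ) (g : Fin n → Γ) (e : Fin n → ℤ) : Γ :=
  ((List.finRange n).map fun k => g k ^ e k).prod

/-- The relators of the presented group `G(t)`:
`(a_i · a_j · a_{j+1}^{t_{i,j,j+1}} ⋯ a_n^{t_{i,j,n}})⁻¹ · (a_j · a_i)` for `1 ≤ i < j ≤ n`. -/
def rels (n : ℕ) (t : Fin n → Fin n → Fin n → ℤ) : Set (FreeGroup (Fin n)) :=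
  { r | ∃ i j : Fin n, i < j ∧
      r = (FreeGroup.of i * FreeGroup.of j *
            prodPow n FreeGroup.of (fun k => if j < k then t i j k else 0))⁻¹ *
          (FreeGroup.of j * FreeGroup.of i) }

/-- The presented group `G(t)` with generators `a_1, …, a_n` and relations
`a_j·a_i = a_i·a_j·a_{j+1}^{t_{i,j,j+1}} ⋯ a_n^{t_{i,j,n}}` for `1 ≤ i < j ≤ n`. -/
abbrev G (n : ℕ) (t : Fin n → Fin n → Fin n → ℤ) : Type := PresentedGroup (rels n t)

/-- The generators `a_1, …, a_n` of `G(t)`. -/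
def a (n : ℕ) (t : Fin n → Fin n → Fin n → ℤ) (i : Fin n) : G n t :=
  PresentedGroup.of i

/-- The normal form map `N_t : ℤⁿ → G(t)`, `x ↦ a_1^{x_1} ⋯ a_n^{x_n}`. -/
def N (n : ℕ) (t : Fin n → Fin n → Fin n → ℤ) (x : Fin n → ℤ) : G n t :=
  prodPow n (a n t) x

/-- The subgroup `G_{i+1}(t) = ⟨a_{i+1}, …, a_n⟩ ≤ G(t)` (0-based: `Gsub n t i` is generated
by the generators `a_j` with `i ≤ j` in 0-based indexing, so `Gsub n t 0 = G_1(t)` and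
`Gsub n t n = G_{n+1}(t) = {1}`). -/
def Gsub (n : ℕ) (t : Fin n → Fin n → Fin n → ℤ) (i : ℕ) : Subgroup (G n t) :=
  Subgroup.closure { x | ∃ j : Fin n, i ≤ (j : ℕ) ∧ x = a n t j }

lemma prodPow_hom {Γ Δ : Type*} [Group Γ] [Group Δ] (f : Γ →* Δ) (n : ℕ)
    (g : Fin n → Γ) (e : Fin n → ℤ) :
    f (prodPow n g e) = prodPow n (fun k => f (g k)) e := by
  simp [prodPow, map_list_prod, Function.comp_def]

lemma prodPow_mem {Γ : Type*} [Group Γ] (H : Subgroup Γ) (n : ℕ) (g : Fin n → Γ)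
    (e : Fin n → ℤ) (h : ∀ k, g k ^ e k ∈ H) : prodPow n g e ∈ H := by
  refine Subgroup.list_prod_mem _ ?_
  intro x hx
  rw [List.mem_map] at hx
  obtain ⟨k, -, rfl⟩ := hx
  exact h k

lemma rel_eq (n : ℕ) (t : Fin n → Fin n → Fin n → ℤ) {i j : Fin n} (h : i < j) :
    a n t j * a n t i = a n t i * a n t j *
      prodPow n (a n t) (fun k => if j < k then t i j k else 0) := by
  have hr : ((FreeGroup.of i * FreeGroup.of j *
            prodPow n FreeGroup.of (fun k => if j < k then t i j k else 0))⁻¹ *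
          (FreeGroup.of j * FreeGroup.of i)) ∈ Subgroup.normalClosure (rels n t) :=
    Subgroup.subset_normalClosure ⟨i, j, h, rfl⟩
  have h1 : PresentedGroup.mk (rels n t) ((FreeGroup.of i * FreeGroup.of j *
            prodPow n FreeGroup.of (fun k => if j < k then t i j k else 0))⁻¹ *
          (FreeGroup.of j * FreeGroup.of i)) = 1 :=
    (QuotientGroup.eq_one_iff _).2 hr
  rw [map_mul, map_inv, inv_mul_eq_one] at h1
  have := h1.symm
  rw [map_mul, map_mul, map_mul, prodPow_hom] at this
  exact this

lemma Gsub_antitone (n : ℕ) (t : Fin n → Fin n → Fin n → ℤ) {i i' : ℕ} (h : i ≤ i') :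
    Gsub n t i' ≤ Gsub n t i := by
  apply Subgroup.closure_mono
  rintro x ⟨j, hj, rfl⟩
  exact ⟨j, le_trans h hj, rfl⟩

lemma a_mem_Gsub (n : ℕ) (t : Fin n → Fin n → Fin n → ℤ) {i : ℕ} {j : Fin n}
    (h : i ≤ (j : ℕ)) : a n t j ∈ Gsub n t i :=
  Subgroup.subset_closure ⟨j, h, rfl⟩

lemma P_mem (n : ℕ) (t : Fin n → Fin n → Fin n → ℤ) (i j : Fin n) {m : ℕ}
    (hm : m ≤ (j : ℕ) + 1) :
    prodPow n (a n t) (fun k => if j < k then t i j k else 0) ∈ Gsub n t m := by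
  refine prodPow_mem _ _ _ _ fun k => ?_
  by_cases hk : j < k
  · simp only [hk, if_true]
    exact Subgroup.zpow_mem _ (a_mem_Gsub n t (le_trans hm hk)) _
  · simp [hk, Subgroup.one_mem]

/-- key commutator computation on generators, assuming normality of the target. -/
lemma comm_gen (n : ℕ) (t : Fin n → Fin n → Fin n → ℤ) {i : ℕ} {j p : Fin n}
    (hij : i ≤ (j : ℕ)) (hN : (Gsub n t (i + 1)).Normal) :
    ⁅a n t p, a n t j⁆ ∈ Gsub n t (i + 1) := by
  rcases lt_trichotomy p j with hpj | hpj | hpj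
  · -- p < j : a_j a_p = a_p a_j P, so ⁅a_p,a_j⁆ = (a_j a_p) P⁻¹ (a_j a_p)⁻¹
    have hrel := rel_eq n t hpj
    have hP : prodPow n (a n t) (fun k => if j < k then t p j k else 0) ∈ Gsub n t (i+1) :=
      P_mem n t p j (by omega)
    have : ⁅a n t p, a n t j⁆ =
        (a n t j * a n t p) * (prodPow n (a n t) (fun k => if j < k then t p j k else 0))⁻¹ *
        (a n t j * a n t p)⁻¹ := by
      rw [commutatorElement_def]
      have : a n t p * a n t j =
          a n t j * a n t p * (prodPow n (a n t) (fun k => if j < k then t p j k else 0))⁻¹ := by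
        rw [hrel]; group
      rw [this]; group
    rw [this]
    exact hN.conj_mem _ (Subgroup.inv_mem _ hP) _
  · simp [hpj, Subgroup.one_mem]
  · -- j < p : a_p a_j = a_j a_p P
    have hrel := rel_eq n t hpj
    have hP : prodPow n (a n t) (fun k => if p < k then t j p k else 0) ∈ Gsub n t (i+1) :=
      P_mem n t j p (by omega)
    have : ⁅a n t p, a n t j⁆ =
        (a n t j * a n t p) * (prodPow n (a n t) (fun k => if p < k then t j p k else 0)) *
        (a n t j * a n t p)⁻¹ := by
      rw [commutatorElement_def, hrel]; group
    rw [this]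
    exact hN.conj_mem _ hP _

lemma key_step (n : ℕ) (t : Fin n → Fin n → Fin n → ℤ) (i : ℕ)
    (hN : (Gsub n t (i + 1)).Normal) :
    ⁅(⊤ : Subgroup (G n t)), Gsub n t i⁆ ≤ Gsub n t (i + 1) := by
  set K := Gsub n t (i + 1)
  let f := QuotientGroup.mk' K
  have hcen : Gsub n t i ≤ (Subgroup.center (G n t ⧸ K)).comap f := by
    apply (Subgroup.closure_le _).2
    rintro x ⟨j, hj, rfl⟩
    simp only [Subgroup.mem_comap, Subgroup.mem_center_iff, SetLike.mem_coe]
    intro q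
    obtain ⟨g, rfl⟩ := QuotientGroup.mk'_surjective K q
    -- show g commutes with a_j mod K, by induction on generators
    have : g ∈ (Subgroup.centralizer {f (a n t j)}).comap f := by
      apply PresentedGroup.generated_by
      intro p
      simp only [Subgroup.mem_comap, Subgroup.mem_centralizer_singleton_iff]
      have hc : ⁅a n t p, a n t j⁆ ∈ K := comm_gen n t hj hN
      have : f ⁅a n t p, a n t j⁆ = 1 := (QuotientGroup.eq_one_iff _).2 hc
      rw [map_commutatorElement] at this
      exact commutatorElement_eq_one_iff_mul_comm.1 this
    exact Subgroup.mem_centralizer_singleton_iff.1 (Subgroup.mem_comap.1 this)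
  rw [Subgroup.commutator_le]
  intro g _ h hh
  have hcent := Subgroup.mem_center_iff.1 (Subgroup.mem_comap.1 (hcen hh))
  have : f ⁅g, h⁆ = 1 := by
    rw [map_commutatorElement]
    exact commutatorElement_eq_one_iff_mul_comm.2 (hcent (f g))
  exact (QuotientGroup.eq_one_iff _).1 this

lemma Gsub_bot (n : ℕ) (t : Fin n → Fin n → Fin n → ℤ) {i : ℕ} (h : n ≤ i) :
    Gsub n t i = ⊥ := by
  rw [Gsub]
  convert Subgroup.closure_empty
  ext x
  simp only [Set.mem_setOf_eq, Set.mem_empty_iff_false, iff_false]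
  rintro ⟨j, hj, -⟩
  omega

lemma comm_le (n : ℕ) (t : Fin n → Fin n → Fin n → ℤ) :
    ∀ d i : ℕ, n ≤ i + d →
      ⁅(⊤ : Subgroup (G n t)), Gsub n t i⁆ ≤ Gsub n t (i + 1) := by
  intro d
  induction d with
  | zero =>
    intro i hi
    rw [Gsub_bot n t (by omega : n ≤ i)]
    rw [Subgroup.commutator_le]
    intro g _ h hh
    rw [Subgroup.mem_bot] at hh
    simp [hh, Subgroup.one_mem]
  | succ d ih =>
    intro i hi
    by_cases hin : n ≤ i
    · rw [Gsub_bot n t hin, Subgroup.commutator_le]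
      intro g _ h hh
      rw [Subgroup.mem_bot] at hh
      simp [hh, Subgroup.one_mem]
    · have hN : (Gsub n t (i + 1)).Normal := by
        constructor
        intro x hx g
        have hc : ⁅g, x⁆ ∈ Gsub n t (i + 1 + 1) :=
          ih (i + 1) (by omega) (Subgroup.commutator_mem_commutator (Subgroup.mem_top g) hx)
        have hle : Gsub n t (i + 1 + 1) ≤ Gsub n t (i + 1) := Gsub_antitone n t (by omega)
        have he : g * x * g⁻¹ = ⁅g, x⁆ * x := by group
        rw [he]
        exact Subgroup.mul_mem _ (hle hc) hx
      exact key_step n t i hN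


/-- The chain `G(t) = G_1(t) ≥ G_2(t) ≥ ⋯ ≥ G_{n+1}(t) = {1}` of subgroups
`G_i(t) = ⟨a_i, …, a_n⟩` is a central series of `G(t)`: each `⁅G(t), G_i(t)⁆` is contained
in `G_{i+1}(t)`; in particular each `G_i(t)` is normal in `G(t)`. -/
theorem Gsub_central_series (n : ℕ) (t : Fin n → Fin n → Fin n → ℤ) :
    Gsub n t 0 = ⊤ ∧ Gsub n t n = ⊥ ∧
    (∀ i : ℕ, i < n → Gsub n t (i + 1) ≤ Gsub n t i) ∧
    (∀ i : ℕ, (Gsub n t i).Normal) ∧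
    (∀ i : ℕ, i < n → ⁅(⊤ : Subgroup (G n t)), Gsub n t i⁆ ≤ Gsub n t (i + 1)) := by
  have hcomm : ∀ i : ℕ, ⁅(⊤ : Subgroup (G n t)), Gsub n t i⁆ ≤ Gsub n t (i + 1) :=
    fun i => comm_le n t n i (by omega)
  refine ⟨?_, Gsub_bot n t le_rfl, fun i _ => Gsub_antitone n t (by omega), ?_, fun i _ => hcomm i⟩
  · rw [Gsub]
    have hs : { x | ∃ j : Fin n, 0 ≤ (j : ℕ) ∧ x = a n t j } =
        Set.range (PresentedGroup.of : Fin n → G n t) := by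
      ext x
      constructor
      · rintro ⟨j, -, rfl⟩; exact ⟨j, rfl⟩
      · rintro ⟨j, rfl⟩; exact ⟨j, Nat.zero_le _, rfl⟩
    rw [hs, PresentedGroup.closure_range_of]
  · intro i
    constructor
    intro x hx g
    have hc : ⁅g, x⁆ ∈ Gsub n t (i + 1) :=
      hcomm i (Subgroup.commutator_mem_commutator (Subgroup.mem_top g) hx)
    have hle : Gsub n t (i + 1) ≤ Gsub n t i := Gsub_antitone n t (by omega)
    have he : g * x * g⁻¹ = ⁅g, x⁆ * x := by group
    rw [he]
    exact Subgroup.mul_mem _ (hle hc) hx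


end HallPoly
end

section
/- Let G be a group with a central series G = G_1 ≥ G_2 ≥ ⋯ ≥ G_n ≥ G_{n+1} = {1} and elements g_i ∈ G_i such that each factor G_i/G_{i+1} is infinite cyclic generated by the image of g_i. Then there exists a family of integers t = (t_{i,j,k})_{1 ≤ i < j < k ≤ n} such that the normal form map N_t : ℤ^n → G(t) is bijective (i.e., G(t) is consistent) and there is a group isomorphism G(t) ≅ G mapping a_i to g_i for each 1 ≤ i ≤ n. -/
namespace HallPoly

section ProdPow
variable {Γ : Type*} [Group Γ] {n : ℕ}

lemma prodPow_zero (g : Fin n → Γ) : prodPow n g (fun _ => 0) = 1 := by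
  unfold prodPow; apply List.prod_eq_one; simp

lemma map_prodPow {Γ₂ : Type*} [Group Γ₂] (f : Γ →* Γ₂) (g : Fin n → Γ) (e : Fin n → ℤ) :
    f (prodPow n g e) = prodPow n (fun k => f (g k)) e := by
  unfold prodPow
  rw [← List.prod_hom _ f, List.map_map]
  simp [Function.comp_def]

lemma prodPow_list_aux (g : Fin n → Γ) (x : Fin n → ℤ) (m : Fin n)
    (hx : ∀ k, k < m → x k = 0) :
    ∀ l : List (Fin n), l.Pairwise (· < ·) →
      (l.map fun k => g k ^ x k).prod
        = (if m ∈ l then g m ^ x m else 1) *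
          (l.map fun k => g k ^ (Function.update x m 0) k).prod := by
  intro l
  induction l with
  | nil => simp
  | cons k l ih =>
    intro hp
    have hp' := hp.of_cons
    have hhead : ∀ j ∈ l, k < j := fun j hj => List.rel_of_pairwise_cons hp hj
    by_cases hkm : k = m
    · subst hkm
      have hml : k ∉ l := fun h => lt_irrefl k (hhead k h)
      have : (l.map fun j => g j ^ x j) = l.map fun j => g j ^ (Function.update x k 0) j := by
        apply List.map_congr_left
        intro j hj
        have : j ≠ k := fun h => (hml (h ▸ hj))
        rw [Function.update_apply, if_neg this]
      simp only [List.map_cons, List.prod_cons, List.mem_cons, true_or, if_pos]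
      rw [this, Function.update_self]
      group
    · by_cases hml : m ∈ l
      · have hkm' : k < m := hhead m hml
        have hxk : x k = 0 := hx k hkm'
        have hxk' : Function.update x m 0 k = 0 := by
          rw [Function.update_apply, if_neg hkm, hxk]
        simp only [List.map_cons, List.prod_cons, hxk, hxk', zpow_zero, one_mul,
          List.mem_cons, hml, or_true, if_pos]
        rw [ih hp', if_pos hml]
      · have hmem : m ∉ k :: l := by simp only [List.mem_cons]; rintro (h | h); exact hkm h.symm; exact hml h
        rw [if_neg hmem, one_mul]
        congr 1
        apply List.map_congr_left
        intro j hj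
        have : j ≠ m := by rintro rfl; exact hmem hj
        rw [Function.update_apply, if_neg this]

lemma prodPow_split (g : Fin n → Γ) (x : Fin n → ℤ) (m : Fin n)
    (hx : ∀ k, k < m → x k = 0) :
    prodPow n g x = g m ^ x m * prodPow n g (Function.update x m 0) := by
  have := prodPow_list_aux g x m hx (List.finRange n) (List.pairwise_lt_finRange n)
  unfold prodPow
  rw [this, if_pos (List.mem_finRange m)]

lemma prodPow_mem_s8 {S : Subgroup Γ} {m : ℕ} {g : Fin n → Γ} {x : Fin n → ℤ}
    (hgS : ∀ k : Fin n, m ≤ (k : ℕ) → g k ∈ S) (hx : ∀ k : Fin n, (k : ℕ) < m → x k = 0) :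
    prodPow n g x ∈ S := by
  apply Subgroup.list_prod_mem
  intro z hz
  simp only [List.mem_map, List.mem_finRange, true_and] at hz
  obtain ⟨k, rfl⟩ := hz
  rcases lt_or_ge (k : ℕ) m with h | h
  · rw [hx k h]; simpa using S.one_mem
  · exact zpow_mem (hgS k h) _

end ProdPow

section NFGamma
variable {Γ : Type*} [Group Γ] {n : ℕ}

lemma chain_le (H : ℕ → Subgroup Γ) (hdesc : ∀ i : ℕ, i < n → H (i + 1) ≤ H i) :
    ∀ m k : ℕ, m ≤ k → k ≤ n → H k ≤ H m := by
  intro m k hmk hkn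
  induction k with
  | zero => obtain rfl : m = 0 := Nat.le_zero.mp hmk; exact le_rfl
  | succ k ih =>
    rcases Nat.lt_or_ge m (k + 1) with h | h
    · exact (hdesc k (by omega)).trans (ih (Nat.lt_succ_iff.mp h) (by omega))
    · obtain rfl : m = k + 1 := le_antisymm hmk h; exact le_rfl

lemma nf_existsUnique (H : ℕ → Subgroup Γ)
    (hHn : H n = ⊥)
    (hdesc : ∀ i : ℕ, i < n → H (i + 1) ≤ H i)
    (g : Fin n → Γ) (hg : ∀ i : Fin n, g i ∈ H (i : ℕ))
    (hcyc : ∀ i : Fin n, Function.Bijective fun m : ℤ =>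
      (QuotientGroup.mk ((⟨g i, hg i⟩ : H (i : ℕ)) ^ m) :
        H (i : ℕ) ⧸ (H ((i : ℕ) + 1)).subgroupOf (H (i : ℕ)))) :
    ∀ d m : ℕ, m ≤ n → n - m ≤ d → ∀ z, z ∈ H m →
      ∃! x : Fin n → ℤ, (∀ k : Fin n, (k : ℕ) < m → x k = 0) ∧ prodPow n g x = z := by
  have base : ∀ z, z ∈ H n →
      ∃! x : Fin n → ℤ, (∀ k : Fin n, (k : ℕ) < n → x k = 0) ∧ prodPow n g x = z := by
    intro z hz
    rw [hHn, Subgroup.mem_bot] at hz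
    subst hz
    refine ⟨fun _ => 0, ⟨fun _ _ => rfl, prodPow_zero g⟩, ?_⟩
    rintro y ⟨hy, -⟩
    funext k
    exact hy k k.isLt
  intro d
  induction d with
  | zero =>
    intro m hmn hd z hz
    obtain rfl : m = n := le_antisymm hmn (by omega)
    exact base z hz
  | succ d ih =>
    intro m hmn hd z hz
    rcases eq_or_lt_of_le hmn with rfl | hlt
    · exact base z hz
    · set m₀ : Fin n := ⟨m, hlt⟩ with hm₀
      obtain ⟨e, he⟩ := (hcyc m₀).2 (QuotientGroup.mk ⟨z, hz⟩)
      have hmem : (g m₀ ^ e)⁻¹ * z ∈ H (m + 1) := by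
        have := (QuotientGroup.eq (s := (H (m + 1)).subgroupOf (H m))).mp he
        rw [Subgroup.mem_subgroupOf] at this
        simpa using this
      have hle : H (m + 1) ≤ H m := hdesc m hlt
      obtain ⟨x', ⟨hx'supp, hx'prod⟩, hx'uniq⟩ :=
        ih (m + 1) hlt (by omega) ((g m₀ ^ e)⁻¹ * z) hmem
      have hx'm : x' m₀ = 0 := hx'supp m₀ (Nat.lt_succ_self m)
      refine ⟨Function.update x' m₀ e, ⟨?_, ?_⟩, ?_⟩
      · intro k hk
        have hne : k ≠ m₀ := by
          intro h; rw [h] at hk; exact absurd hk (lt_irrefl m)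
        rw [Function.update_apply, if_neg hne]
        exact hx'supp k (by omega)
      · rw [prodPow_split g _ m₀ ?supp]
        case supp =>
          intro k hk
          have hne : k ≠ m₀ := ne_of_lt hk
          have hk' : (k : ℕ) < m := hk
          rw [Function.update_apply, if_neg hne]
          exact hx'supp k (by omega)
        rw [Function.update_idem, Function.update_self]
        have : Function.update x' m₀ 0 = x' := by
          rw [← hx'm, Function.update_eq_self]
        rw [this, hx'prod]
        group
      · rintro y ⟨hysupp, hyprod⟩
        have hsplit := prodPow_split g y m₀ (fun k hk => hysupp k hk)
        have hrest : prodPow n g (Function.update y m₀ 0) ∈ H (m + 1) := by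
          refine prodPow_mem_s8 (fun k hk => chain_le H hdesc (m+1) k hk k.isLt.le (hg k)) ?_
          intro k hk
          rcases eq_or_ne k m₀ with rfl | hne
          · simp
          · rw [Function.update_apply, if_neg hne]
            exact hysupp k (by
              have : (k : ℕ) ≠ m := fun h => hne (Fin.ext h)
              omega)
        have hym : y m₀ = e := by
          apply (hcyc m₀).1
          rw [he]
          have : ((⟨g m₀, hg m₀⟩ : H ((m₀:ℕ))) ^ (y m₀))⁻¹ * ⟨z, hz⟩
              ∈ (H ((m₀:ℕ) + 1)).subgroupOf (H ((m₀:ℕ))) := by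
            rw [Subgroup.mem_subgroupOf]
            have : ((((⟨g m₀, hg m₀⟩ : H ((m₀:ℕ))) ^ (y m₀))⁻¹ *
                (⟨z, hz⟩ : H ((m₀:ℕ))) : H ((m₀:ℕ))) : Γ)
                = (g m₀ ^ (y m₀))⁻¹ * z := by
              push_cast; rfl
            rw [this]
            rw [hsplit] at hyprod
            have : prodPow n g (Function.update y m₀ 0) = (g m₀ ^ (y m₀))⁻¹ * z := by
              rw [← hyprod]; group
            rw [← this]
            exact hrest
          exact (QuotientGroup.eq (s := (H ((m₀:ℕ) + 1)).subgroupOf (H ((m₀:ℕ))))).mpr this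
        have hprod' : prodPow n g (Function.update y m₀ 0) = (g m₀ ^ e)⁻¹ * z := by
          rw [hsplit, hym] at hyprod
          rw [← hyprod]; group
        have hupd : Function.update y m₀ 0 = x' := by
          apply hx'uniq
          refine ⟨?_, hprod'⟩
          intro k hk
          rcases eq_or_ne k m₀ with rfl | hne
          · simp
          · rw [Function.update_apply, if_neg hne]
            exact hysupp k (by
              have : (k : ℕ) ≠ m := fun h => hne (Fin.ext h)
              omega)
        funext k
        rcases eq_or_ne k m₀ with rfl | hne
        · rw [Function.update_self]; exact hym
        · rw [Function.update_apply, if_neg hne, ← hupd,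
            Function.update_apply, if_neg hne]

end NFGamma

section Collection
variable (n : ℕ) (t : Fin n → Fin n → Fin n → ℤ)

/-- The tail word appearing in the relation for the pair `i < j`. -/
def w (i j : Fin n) : G n t :=
  prodPow n (a n t) (fun k => if j < k then t i j k else 0)

lemma rel_a (i j : Fin n) (hij : i < j) :
    a n t j * a n t i = a n t i * a n t j * w n t i j := by
  have hr : (FreeGroup.of i * FreeGroup.of j *
      prodPow n FreeGroup.of (fun k => if j < k then t i j k else 0))⁻¹ *
      (FreeGroup.of j * FreeGroup.of i) ∈ rels n t := ⟨i, j, hij, rfl⟩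
  have h1 : (PresentedGroup.mk (rels n t)) ((FreeGroup.of i * FreeGroup.of j *
      prodPow n FreeGroup.of (fun k => if j < k then t i j k else 0))⁻¹ *
      (FreeGroup.of j * FreeGroup.of i)) = 1 :=
    (QuotientGroup.eq_one_iff _).2 (Subgroup.subset_normalClosure hr)
  rw [map_mul, map_inv, map_mul, map_mul, map_mul, map_prodPow] at h1
  have := inv_mul_eq_one.mp h1
  exact this.symm

/-- The subgroup generated by the generators with index `≥ m`. -/
def K (m : ℕ) : Subgroup (G n t) :=
  Subgroup.closure ((a n t) '' {k : Fin n | m ≤ (k : ℕ)})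

lemma a_mem_K {m : ℕ} {k : Fin n} (h : m ≤ (k : ℕ)) : a n t k ∈ K n t m :=
  Subgroup.subset_closure ⟨k, h, rfl⟩

lemma K_antitone {m m' : ℕ} (h : m ≤ m') : K n t m' ≤ K n t m :=
  Subgroup.closure_mono (Set.image_mono fun k hk => le_trans h hk)

lemma prodPow_mem_K {m : ℕ} {x : Fin n → ℤ} (hx : ∀ k : Fin n, (k : ℕ) < m → x k = 0) :
    prodPow n (a n t) x ∈ K n t m :=
  prodPow_mem_s8 (fun _ hk => a_mem_K n t hk) hx

lemma w_mem_K (i j : Fin n) : w n t i j ∈ K n t ((j : ℕ) + 1) :=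
  prodPow_mem_K n t (fun k hk => if_neg (by
    intro h
    have : (j : ℕ) < (k : ℕ) := h
    omega))

lemma conj_inv_mem {m j : Fin n} (hmj : m < j) :
    (a n t m)⁻¹ * a n t j * a n t m ∈ K n t ((m : ℕ) + 1) := by
  have h : (a n t m)⁻¹ * a n t j * a n t m = a n t j * w n t m j :=
    calc (a n t m)⁻¹ * a n t j * a n t m = (a n t m)⁻¹ * (a n t j * a n t m) := by group
      _ = (a n t m)⁻¹ * (a n t m * a n t j * w n t m j) := by rw [rel_a n t m j hmj]
      _ = a n t j * w n t m j := by group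
  rw [h]
  exact mul_mem (a_mem_K n t hmj) (K_antitone n t (by have : (m:ℕ) < (j:ℕ) := hmj; omega)
    (w_mem_K n t m j))

lemma conj_mem : ∀ (d : ℕ) (m j : Fin n), m < j → n - (j : ℕ) ≤ d →
    a n t m * a n t j * (a n t m)⁻¹ ∈ K n t ((m : ℕ) + 1) := by
  intro d
  induction d with
  | zero => intro m j _ hd; exact absurd hd (by have := j.isLt; omega)
  | succ d ih =>
    intro m j hmj hd
    have hrel := rel_a n t m j hmj
    set cj : G n t →* G n t := (MulAut.conj (a n t m)).toMonoidHom with hcj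
    have hcj_apply : ∀ z : G n t, cj z = a n t m * z * (a n t m)⁻¹ := fun z => rfl
    have h2 : a n t m * (a n t j * w n t m j) * (a n t m)⁻¹ = a n t j := by
      rw [← mul_assoc, ← hrel]; group
    have hkey : a n t m * a n t j * (a n t m)⁻¹
        = a n t j * (cj (w n t m j))⁻¹ := by
      rw [hcj_apply]
      calc a n t m * a n t j * (a n t m)⁻¹
          = (a n t m * (a n t j * w n t m j) * (a n t m)⁻¹) *
            (a n t m * w n t m j * (a n t m)⁻¹)⁻¹ := by group
        _ = a n t j * (a n t m * w n t m j * (a n t m)⁻¹)⁻¹ := by rw [h2]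
    rw [hkey]
    have hw : cj (w n t m j) ∈ K n t ((m : ℕ) + 1) := by
      rw [w, map_prodPow]
      refine prodPow_mem_s8 (m := (j : ℕ) + 1) ?_ ?_
      · intro k hk
        rw [hcj_apply]
        have hmk : m < k := by
          have h1 : (m : ℕ) < (j : ℕ) := hmj
          exact (by omega : (m : ℕ) < (k : ℕ))
        exact ih m k hmk (by omega)
      · intro k hk
        exact if_neg (by intro h; have : (j : ℕ) < (k : ℕ) := h; omega)
    exact mul_mem (a_mem_K n t (by have : (m:ℕ) < (j:ℕ) := hmj; omega)) (inv_mem hw)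

lemma a_mem_normalizer (m : Fin n) : a n t m ∈ Subgroup.normalizer (K n t ((m : ℕ) + 1) : Set (G n t)) := by
  rw [Subgroup.mem_normalizer_iff]
  have fwd : ∀ h ∈ K n t ((m : ℕ) + 1), a n t m * h * (a n t m)⁻¹ ∈ K n t ((m : ℕ) + 1) := by
    have hle : K n t ((m : ℕ) + 1) ≤
        Subgroup.comap ((MulAut.conj (a n t m)).toMonoidHom) (K n t ((m : ℕ) + 1)) := by
      rw [K, Subgroup.closure_le]
      rintro _ ⟨k, hk, rfl⟩
      have hmk : m < k := hk
      exact conj_mem n t (n - (k : ℕ)) m k hmk le_rfl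
    intro h hh
    exact hle hh
  have bwd : ∀ h ∈ K n t ((m : ℕ) + 1), (a n t m)⁻¹ * h * a n t m ∈ K n t ((m : ℕ) + 1) := by
    have hle : K n t ((m : ℕ) + 1) ≤
        Subgroup.comap ((MulAut.conj (a n t m)⁻¹).toMonoidHom) (K n t ((m : ℕ) + 1)) := by
      rw [K, Subgroup.closure_le]
      rintro _ ⟨k, hk, rfl⟩
      have hmk : m < k := hk
      have : ((MulAut.conj (a n t m)⁻¹).toMonoidHom) (a n t k)
          = (a n t m)⁻¹ * a n t k * a n t m := by
        simp [MulAut.conj]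
      rw [SetLike.mem_coe, Subgroup.mem_comap, this]
      exact conj_inv_mem n t hmk
    intro h hh
    have := hle hh
    rw [Subgroup.mem_comap] at this
    have h2 : ((MulAut.conj (a n t m)⁻¹).toMonoidHom) h
        = (a n t m)⁻¹ * h * a n t m := by simp [MulAut.conj]
    rwa [h2] at this
  intro h
  constructor
  · exact fun hh => fwd h hh
  · intro hh
    have := bwd _ hh
    have h2 : (a n t m)⁻¹ * (a n t m * h * (a n t m)⁻¹) * a n t m = h := by group
    rwa [h2] at this

lemma conj_zpow_mem (m : Fin n) (c : ℤ) {y : G n t} (hy : y ∈ K n t ((m : ℕ) + 1)) :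
    a n t m ^ c * y * (a n t m ^ c)⁻¹ ∈ K n t ((m : ℕ) + 1) := by
  have : a n t m ^ c ∈ Subgroup.normalizer (K n t ((m : ℕ) + 1) : Set (G n t)) :=
    zpow_mem (a_mem_normalizer n t m) c
  exact (Subgroup.mem_normalizer_iff.mp this y).mp hy

lemma collect : ∀ (d m : ℕ), n - m ≤ d → ∀ z ∈ K n t m,
    ∃ x : Fin n → ℤ, (∀ k : Fin n, (k : ℕ) < m → x k = 0) ∧ prodPow n (a n t) x = z := by
  have hbot : ∀ m : ℕ, n ≤ m → ∀ z ∈ K n t m,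
      ∃ x : Fin n → ℤ, (∀ k : Fin n, (k : ℕ) < m → x k = 0) ∧ prodPow n (a n t) x = z := by
    intro m hm z hz
    have hempty : (a n t) '' {k : Fin n | m ≤ (k : ℕ)} = ∅ := by
      apply Set.image_eq_empty.mpr
      ext k
      simp only [Set.mem_setOf_eq, Set.mem_empty_iff_false, iff_false]
      have := k.isLt; omega
    rw [K, hempty, Subgroup.closure_empty, Subgroup.mem_bot] at hz
    subst hz
    exact ⟨fun _ => 0, fun _ _ => rfl, prodPow_zero _⟩
  intro d
  induction d with
  | zero =>
    intro m hd z hz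
    exact hbot m (by omega) z hz
  | succ d ih =>
    intro m hd z hz
    rcases Nat.lt_or_ge m n with hlt | hge
    · set m₀ : Fin n := ⟨m, hlt⟩ with hm₀
      have hval : ((m₀ : Fin n) : ℕ) = m := rfl
      set T : Subgroup (G n t) :=
        { carrier := {z | ∃ e : ℤ, ∃ y ∈ K n t (m + 1), z = a n t m₀ ^ e * y}
          one_mem' := ⟨0, 1, one_mem _, by simp⟩
          mul_mem' := by
            rintro p q ⟨e, y, hy, rfl⟩ ⟨e', y', hy', rfl⟩
            refine ⟨e + e', (a n t m₀ ^ e')⁻¹ * y * a n t m₀ ^ e' * y', ?_, ?_⟩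
            · refine mul_mem ?_ hy'
              have := conj_zpow_mem n t m₀ (-e') hy
              simpa [zpow_neg] using this
            · rw [zpow_add]; group
          inv_mem' := by
            rintro p ⟨e, y, hy, rfl⟩
            refine ⟨-e, a n t m₀ ^ e * y⁻¹ * (a n t m₀ ^ e)⁻¹, ?_, ?_⟩
            · exact conj_zpow_mem n t m₀ e (inv_mem hy)
            · rw [zpow_neg]; group } with hT
      have hKT : K n t m ≤ T := by
        rw [K, Subgroup.closure_le]
        rintro _ ⟨k, hk, rfl⟩
        rcases Nat.eq_or_lt_of_le hk with heq | hlt2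
        · have : k = m₀ := Fin.ext heq.symm
          subst this
          exact ⟨1, 1, one_mem _, by simp⟩
        · exact ⟨0, a n t k, a_mem_K n t hlt2, by simp⟩
      obtain ⟨e, y, hy, rfl⟩ := hKT hz
      obtain ⟨x', hx'supp, hx'prod⟩ := ih (m + 1) (by omega) y hy
      have hx'm : x' m₀ = 0 := hx'supp m₀ (Nat.lt_succ_self m)
      refine ⟨Function.update x' m₀ e, ?_, ?_⟩
      · intro k hk
        have hne : k ≠ m₀ := by
          intro h; rw [h] at hk; exact absurd hk (lt_irrefl m)
        rw [Function.update_apply, if_neg hne]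
        exact hx'supp k (by omega)
      · rw [prodPow_split (a n t) _ m₀ ?supp]
        case supp =>
          intro k hk
          have hne : k ≠ m₀ := ne_of_lt hk
          have hk' : (k : ℕ) < m := hk
          rw [Function.update_apply, if_neg hne]
          exact hx'supp k (by omega)
        rw [Function.update_idem, Function.update_self]
        have : Function.update x' m₀ 0 = x' := by
          rw [← hx'm, Function.update_eq_self]
        rw [this, hx'prod]
    · exact hbot m hge z hz

lemma N_surjective : Function.Surjective (N n t) := by
  intro z
  have hK0 : z ∈ K n t 0 := by
    have hset : {k : Fin n | 0 ≤ (k : ℕ)} = Set.univ := by ext; simp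
    have htop : K n t 0 = ⊤ := by
      rw [K, hset, Set.image_univ]
      exact PresentedGroup.closure_range_of (rels n t)
    rw [htop]; trivial
  obtain ⟨x, _, hx⟩ := collect n t n 0 (by omega) z hK0
  exact ⟨x, hx⟩

end Collection

/-- Lemma 2.1: if `Γ = H_1 ≥ ⋯ ≥ H_{n+1} = {1}` is a central series with infinite cyclic
factors generated by the images of `g_1, …, g_n`, then there is a family of integers `t`
such that `G(t)` is consistent (the normal form map `N_t` is bijective) and there is a
group isomorphism `G(t) ≅ Γ` sending `a_i` to `g_i`. -/
theorem exists_consistent_presentation {Γ : Type*} [Group Γ] (n : ℕ)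
    (H : ℕ → Subgroup Γ)
    (hH0 : H 0 = ⊤) (hHn : H n = ⊥)
    (hdesc : ∀ i : ℕ, i < n → H (i + 1) ≤ H i)
    (hnormal : ∀ i : ℕ, (H i).Normal)
    (hcentral : ∀ i : ℕ, i < n → ⁅(⊤ : Subgroup Γ), H i⁆ ≤ H (i + 1))
    (g : Fin n → Γ) (hg : ∀ i : Fin n, g i ∈ H (i : ℕ))
    (hcyc : ∀ i : Fin n, Function.Bijective fun m : ℤ =>
      (QuotientGroup.mk ((⟨g i, hg i⟩ : H (i : ℕ)) ^ m) :
        H (i : ℕ) ⧸ (H ((i : ℕ) + 1)).subgroupOf (H (i : ℕ)))) :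
    ∃ t : Fin n → Fin n → Fin n → ℤ,
      Function.Bijective (N n t) ∧
      ∃ φ : G n t ≃* Γ, ∀ i : Fin n, φ (a n t i) = g i := by
  have nf := nf_existsUnique H hHn hdesc g hg hcyc
  -- the commutator correction terms
  have hc : ∀ i j : Fin n, (g i * g j)⁻¹ * (g j * g i) ∈ H ((j : ℕ) + 1) := by
    intro i j
    open scoped commutatorElement in
    have h1 : (g i * g j)⁻¹ * (g j * g i) = ⁅(g j)⁻¹, (g i)⁻¹⁆ := by
      rw [commutatorElement_def]; group
    rw [h1]
    refine hcentral (j : ℕ) j.isLt ?_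
    open scoped commutatorElement in
    have : ⁅(g j)⁻¹, (g i)⁻¹⁆ ∈ ⁅H (j : ℕ), (⊤ : Subgroup Γ)⁆ :=
      Subgroup.commutator_mem_commutator (inv_mem (hg j)) (Subgroup.mem_top _)
    rwa [Subgroup.commutator_comm] at this
  -- choose normal forms for the correction terms
  have spec : ∀ i j : Fin n, i < j → ∃! x : Fin n → ℤ,
      (∀ k : Fin n, (k : ℕ) < (j : ℕ) + 1 → x k = 0) ∧
      prodPow n g x = (g i * g j)⁻¹ * (g j * g i) :=
    fun i j _ => nf n ((j : ℕ) + 1) j.isLt (by omega) _ (hc i j)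
  let xw : ∀ i j : Fin n, i < j → (Fin n → ℤ) := fun i j h => (spec i j h).choose
  have hxw : ∀ (i j : Fin n) (h : i < j),
      (∀ k : Fin n, (k : ℕ) < (j : ℕ) + 1 → xw i j h k = 0) ∧
      prodPow n g (xw i j h) = (g i * g j)⁻¹ * (g j * g i) :=
    fun i j h => (spec i j h).choose_spec.1
  set t : Fin n → Fin n → Fin n → ℤ := fun i j k => if h : i < j then xw i j h k else 0
    with ht
  have hteq : ∀ (i j : Fin n) (h : i < j),
      (fun k => if j < k then t i j k else 0) = xw i j h := by
    intro i j h
    funext k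
    by_cases hjk : j < k
    · rw [if_pos hjk]; simp only [ht]; rw [dif_pos h]
    · rw [if_neg hjk]
      have hkj : (k : ℕ) ≤ (j : ℕ) := Fin.not_lt.mp hjk
      exact ((hxw i j h).1 k (by omega)).symm
  have hrels : ∀ r ∈ rels n t, FreeGroup.lift g r = 1 := by
    rintro r ⟨i, j, hij, rfl⟩
    simp only [map_mul, map_inv, FreeGroup.lift_apply_of]
    rw [map_prodPow]
    have e1 : prodPow n (fun k => (FreeGroup.lift g) (FreeGroup.of k))
        (fun k => if j < k then t i j k else 0) = prodPow n g (xw i j hij) := by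
      rw [hteq i j hij]
      congr 1
      funext k
      simp
    rw [e1, (hxw i j hij).2]
    group
  let φ₀ : G n t →* Γ := PresentedGroup.toGroup hrels
  have hφa : ∀ i : Fin n, φ₀ (a n t i) = g i := fun i => PresentedGroup.toGroup.of hrels
  have hφN : ∀ x : Fin n → ℤ, φ₀ (N n t x) = prodPow n g x := by
    intro x
    rw [N, map_prodPow]
    congr 1
    funext k
    exact hφa k
  have hPinj : ∀ x y : Fin n → ℤ, prodPow n g x = prodPow n g y → x = y := by
    intro x y hxy
    have h0 := nf n 0 (Nat.zero_le n) (by omega) (prodPow n g y) (hH0 ▸ Subgroup.mem_top _)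
    exact h0.unique ⟨fun k hk => absurd hk (Nat.not_lt_zero _), hxy⟩
      ⟨fun k hk => absurd hk (Nat.not_lt_zero _), rfl⟩
  have hPsurj : ∀ γ : Γ, ∃ x, prodPow n g x = γ := by
    intro γ
    obtain ⟨x, ⟨-, hx⟩, -⟩ := nf n 0 (Nat.zero_le n) (by omega) γ (hH0 ▸ Subgroup.mem_top _)
    exact ⟨x, hx⟩
  have hNsurj := N_surjective n t
  have hNinj : Function.Injective (N n t) := by
    intro x y hxy
    apply hPinj
    rw [← hφN, ← hφN, hxy]
  have hφbij : Function.Bijective φ₀ := by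
    constructor
    · intro z z' hzz
      obtain ⟨x, rfl⟩ := hNsurj z
      obtain ⟨y, rfl⟩ := hNsurj z'
      rw [hφN, hφN] at hzz
      rw [hPinj x y hzz]
    · intro γ
      obtain ⟨x, hx⟩ := hPsurj γ
      exact ⟨N n t x, (hφN x).trans hx⟩
  exact ⟨t, ⟨hNinj, hNsurj⟩, ⟨MulEquiv.ofBijective φ₀ hφbij, fun i => hφa i⟩⟩

end HallPoly
end
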